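/- Let m ≥ 1 and n ≥ 3. Consider the equivalence relation of C_m-switch equivalence on the set of all colourings of the complete graph on Fin n with colours in ZMod m. If m is odd, then every equivalence class has exactly m^n elements and the number of equivalence classes is m^{C(n,2) − n}, where C(n,2) = n(n−1)/2. If m is even, then every equivalence class has exactly m^n / 2 elements and the number of equivalence classes is 2 · m^{C(n,2) − n}. -/

import Mathlib

/-- The edges (unordered pairs of distinct vertices) of the complete graph on `Fin n`. -/
abbrev NonDiagEdge (n : ℕ) := {s : Sym2 (Fin n) // ¬ s.IsDiag}

/-- The `C_m`-switch of the colouring `c` by `k`: the edge `{u,v}` gets the colour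
`c {u,v} + k u + k v`. -/
def CmSwitch {m n : ℕ} (c : NonDiagEdge n → ZMod m) (k : Fin n → ZMod m) :
    NonDiagEdge n → ZMod m :=
  fun e => c e + Sym2.lift ⟨fun u v => k u + k v, fun u v => add_comm (k u) (k v)⟩ e.1

/-- The colouring `c` contains a monochromatic complete graph on `t` vertices of colour `i`. -/
def HasMono {m n : ℕ} (c : NonDiagEdge n → ZMod m) (i : ZMod m) (t : ℕ) : Prop :=
  ∃ S : Finset (Fin n), S.card = t ∧
    ∀ x ∈ S, ∀ y ∈ S, ∀ h : x ≠ y, c ⟨s(x, y), by simpa using h⟩ = i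

/-- Two colourings are `C_m`-switch equivalent if one is the `C_m`-switch of the other. -/
def CmEquiv {m n : ℕ} (c c' : NonDiagEdge n → ZMod m) : Prop :=
  ∃ k : Fin n → ZMod m, c' = CmSwitch c k

def phi (m n : ℕ) : (Fin n → ZMod m) →+ (NonDiagEdge n → ZMod m) where
  toFun k := fun e => Sym2.lift ⟨fun u v => k u + k v, fun u v => add_comm (k u) (k v)⟩ e.1
  map_zero' := by
    funext e
    obtain ⟨s, hs⟩ := e
    induction s using Sym2.ind with
    | _ u v => simp
  map_add' k k' := by
    funext e
    obtain ⟨s, hs⟩ := e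
    induction s using Sym2.ind with
    | _ u v => simp [Pi.add_apply]; ring

lemma switch_eq {m n : ℕ} (c : NonDiagEdge n → ZMod m) (k : Fin n → ZMod m) :
    CmSwitch c k = c + phi m n k := rfl

lemma equiv_iff {m n : ℕ} (c c' : NonDiagEdge n → ZMod m) :
    CmEquiv c c' ↔ c' - c ∈ (phi m n).range := by
  constructor
  · rintro ⟨k, rfl⟩; exact ⟨k, by simp [switch_eq]⟩
  · rintro ⟨k, hk⟩; exact ⟨k, by rw [switch_eq, hk]; ring⟩

lemma mem_ker_iff {m n : ℕ} (k : Fin n → ZMod m) :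
    k ∈ (phi m n).ker ↔ ∀ u v : Fin n, u ≠ v → k u + k v = 0 := by
  constructor
  · intro h u v huv
    have := congrFun h ⟨s(u, v), by simpa using huv⟩
    simpa [phi] using this
  · intro h
    funext e
    obtain ⟨s, hs⟩ := e
    induction s using Sym2.ind with
    | _ u v =>
      have : u ≠ v := by simpa using hs
      simpa [phi] using h u v this

lemma odd_card (m : ℕ) (hodd : Odd m) :
    Nat.card {a : ZMod m // a + a = 0} = 1 := by
  haveI : NeZero m := ⟨by rcases hodd with ⟨t, ht⟩; omega⟩
  have h2 : IsUnit (2 : ZMod m) := by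
    have : IsUnit ((2 : ℕ) : ZMod m) := by
      rw [ZMod.isUnit_iff_coprime]
      simpa [Nat.coprime_comm] using (Nat.coprime_two_left).mpr hodd
    simpa using this
  have key : ∀ a : ZMod m, a + a = 0 → a = 0 := fun a ha =>
    (h2.mul_right_eq_zero).mp (by rw [two_mul]; exact ha)
  rw [Nat.card_eq_one_iff_unique]
  exact ⟨⟨fun a b => Subtype.ext ((key _ a.2).trans (key _ b.2).symm)⟩, ⟨⟨0, by simp⟩⟩⟩

lemma even_card (m : ℕ) (hm : 1 ≤ m) (heven : Even m) :
    Nat.card {a : ZMod m // a + a = 0} = 2 := by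
  haveI : NeZero m := ⟨by omega⟩
  obtain ⟨t, rfl⟩ := heven
  have ht : 1 ≤ t := by omega
  have key : ∀ a : ZMod (t + t), a + a = 0 ↔ (a = 0 ∨ a = (t : ZMod (t+t))) := by
    intro a
    constructor
    · intro ha
      have hv : (t + t) ∣ (a.val + a.val) :=
        (ZMod.natCast_eq_zero_iff (a.val + a.val) (t+t)).mp
          (by push_cast [ZMod.natCast_val]; simpa using ha)
      have hlt : a.val < t + t := a.val_lt
      have hval : a.val = 0 ∨ a.val = t := by
        obtain ⟨d, hd⟩ := hv
        have hd2 : d < 2 := by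
          by_contra hc
          have : (t+t)*2 ≤ (t+t)*d := Nat.mul_le_mul_left _ (by omega)
          omega
        interval_cases d <;> omega
      rcases hval with h | h
      · left; exact (ZMod.val_eq_zero a).mp h
      · right
        apply ZMod.val_injective
        rw [h, ZMod.val_natCast_of_lt (by omega)]
    · rintro (rfl | rfl)
      · simp
      · rw [← Nat.cast_add, ZMod.natCast_self]
  have hset : {a : ZMod (t+t) | a + a = 0} = {0, (t : ZMod (t+t))} := by
    ext a; simpa using key a
  have htne : (t : ZMod (t+t)) ≠ 0 := by
    rw [Ne, ZMod.natCast_eq_zero_iff]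
    intro h; exact absurd (Nat.le_of_dvd (by omega) h) (by omega)
  calc Nat.card {a : ZMod (t+t) // a + a = 0}
      = Set.ncard {a : ZMod (t+t) | a + a = 0} := (Nat.card_coe_set_eq _)
    _ = 2 := by rw [hset]; exact Set.ncard_pair htne.symm

/-- For `n ≥ 3`, the kernel of `phi` is the constants `a` with `a + a = 0`. -/
def kerEquiv (m n : ℕ) (hn : 3 ≤ n) :
    (phi m n).ker ≃ {a : ZMod m // a + a = 0} where
  toFun k := by
    refine ⟨k.1 ⟨0, by omega⟩, ?_⟩
    have h := (mem_ker_iff k.1).mp k.2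
    have h01 := h ⟨0, by omega⟩ ⟨1, by omega⟩ (by simp [Fin.ext_iff])
    have h02 := h ⟨0, by omega⟩ ⟨2, by omega⟩ (by simp [Fin.ext_iff])
    have h12 := h ⟨1, by omega⟩ ⟨2, by omega⟩ (by simp [Fin.ext_iff])
    have : k.1 ⟨0, by omega⟩ + k.1 ⟨0, by omega⟩
        = (k.1 ⟨0, by omega⟩ + k.1 ⟨1, by omega⟩) + (k.1 ⟨0, by omega⟩ + k.1 ⟨2, by omega⟩)
          - (k.1 ⟨1, by omega⟩ + k.1 ⟨2, by omega⟩) := by ring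
    rw [this, h01, h02, h12]; ring
  invFun a := by
    refine ⟨fun _ => a.1, (mem_ker_iff _).mpr fun u v _ => a.2⟩
  left_inv k := by
    apply Subtype.ext
    funext x
    have h := (mem_ker_iff k.1).mp k.2
    show k.1 ⟨0, by omega⟩ = k.1 x
    symm
    have key : ∀ y : Fin n, x ≠ y → (⟨0, by omega⟩ : Fin n) ≠ y →
        k.1 x = k.1 ⟨0, by omega⟩ := by
      intro y h1 h2
      have e1 := h x y h1
      have e2 := h ⟨0, by omega⟩ y h2
      linear_combination e1 - e2
    by_cases hx0 : x = ⟨0, by omega⟩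
    · rw [hx0]
    · by_cases hx1 : x = (⟨1, by omega⟩ : Fin n)
      · exact key ⟨2, by omega⟩ (by rw [hx1]; simp [Fin.ext_iff]) (by simp [Fin.ext_iff])
      · exact key ⟨1, by omega⟩ hx1 (by simp [Fin.ext_iff])
  right_inv a := by apply Subtype.ext; rfl

lemma choose_ge (n : ℕ) (hn : 3 ≤ n) : n ≤ n.choose 2 := by
  rw [Nat.choose_two_right, Nat.le_div_iff_mul_le two_pos]
  calc n * 2 ≤ n * (n-1) := Nat.mul_le_mul_left n (by omega)
    _ = n * (n-1) := rfl

theorem stmt11 (m n : ℕ) (hm : 1 ≤ m) (hn : 3 ≤ n) :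
    (Odd m →
      (∀ c : NonDiagEdge n → ZMod m, Set.ncard {c' | CmEquiv c c'} = m ^ n) ∧
      Nat.card (Quot (CmEquiv (m := m) (n := n))) = m ^ (n.choose 2 - n)) ∧
    (Even m →
      (∀ c : NonDiagEdge n → ZMod m, Set.ncard {c' | CmEquiv c c'} = m ^ n / 2) ∧
      Nat.card (Quot (CmEquiv (m := m) (n := n))) = 2 * m ^ (n.choose 2 - n)) := by
  haveI : NeZero m := ⟨by omega⟩
  set H := (phi m n).range with hH
  set K := Nat.card (phi m n).ker with hKdef
  -- card of the whole group of switches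
  have hG : Nat.card (Fin n → ZMod m) = m ^ n := by
    rw [Nat.card_eq_fintype_card, Fintype.card_fun, ZMod.card, Fintype.card_fin]
  have hE : Nat.card (NonDiagEdge n → ZMod m) = m ^ (n.choose 2) := by
    rw [Nat.card_eq_fintype_card, Fintype.card_fun, ZMod.card,
      Sym2.card_subtype_not_diag, Fintype.card_fin]
  -- card of range times card of kernel
  have hHK : Nat.card H * K = m ^ n := by
    rw [← hG, hKdef,
      AddSubgroup.card_eq_card_quotient_mul_card_addSubgroup (phi m n).ker]
    congr 1
    exact Nat.card_congr (QuotientAddGroup.quotientKerEquivRange (phi m n)).toEquiv.symm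
  -- every class is a coset of H
  have horbit : ∀ c : NonDiagEdge n → ZMod m,
      Set.ncard {c' | CmEquiv c c'} = Nat.card H := by
    intro c
    have : {c' | CmEquiv c c'} = (fun h => c + h) '' (H : Set _) := by
      ext c'
      simp only [Set.mem_setOf_eq, equiv_iff, Set.mem_image, SetLike.mem_coe]
      constructor
      · intro h; exact ⟨c' - c, h, by ring⟩
      · rintro ⟨h, hh, rfl⟩; simpa [hH] using hh
    rw [this, Set.ncard_image_of_injective _ (add_right_injective c),
      ← Nat.card_coe_set_eq]
    rfl
  -- the quotient
  have hquot : Nat.card (Quot (CmEquiv (m := m) (n := n))) * Nat.card H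
      = m ^ (n.choose 2) := by
    have hrel : ∀ c c' : NonDiagEdge n → ZMod m, CmEquiv c c' →
        (QuotientAddGroup.mk c : _ ⧸ H) = QuotientAddGroup.mk c' := by
      intro c c' h
      rw [QuotientAddGroup.eq]
      have := (equiv_iff c c').mp h
      simpa [neg_add_eq_sub, hH] using this
    have hrel' : ∀ c c' : NonDiagEdge n → ZMod m,
        (QuotientAddGroup.leftRel H) c c' → CmEquiv c c' := by
      intro c c' h
      rw [QuotientAddGroup.leftRel_apply] at h
      rw [equiv_iff]
      simpa [neg_add_eq_sub, hH] using h
    have e : Quot (CmEquiv (m := m) (n := n)) ≃ ((NonDiagEdge n → ZMod m) ⧸ H) :=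
      { toFun := Quot.lift QuotientAddGroup.mk hrel
        invFun := Quotient.lift (Quot.mk _) (fun a b h => Quot.sound (hrel' a b h))
        left_inv := fun q => Quot.inductionOn q (fun c => rfl)
        right_inv := fun q => QuotientAddGroup.induction_on q (fun c => rfl) }
    rw [Nat.card_congr e, ← hE,
      AddSubgroup.card_eq_card_quotient_mul_card_addSubgroup H]
  have hle : n ≤ n.choose 2 := choose_ge n hn
  have hpow : m ^ (n.choose 2) = m ^ (n.choose 2 - n) * m ^ n := by
    rw [← pow_add, Nat.sub_add_cancel hle]
  have hpos : 0 < m ^ n := Nat.pow_pos hm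
  constructor
  · intro hodd
    have hK1 : K = 1 := by
      rw [hKdef, Nat.card_congr (kerEquiv m n hn)]
      exact odd_card m hodd
    have hHcard : Nat.card H = m ^ n := by rw [← hHK, hK1, mul_one]
    refine ⟨fun c => by rw [horbit c, hHcard], ?_⟩
    apply Nat.eq_of_mul_eq_mul_right hpos
    rw [← hHcard]
    rw [hquot, hHcard, hpow]
  · intro heven
    have hK2 : K = 2 := by
      rw [hKdef, Nat.card_congr (kerEquiv m n hn)]
      exact even_card m hm heven
    have hHcard2 : Nat.card H * 2 = m ^ n := by rw [← hHK, hK2]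
    have hHcard : Nat.card H = m ^ n / 2 :=
      (Nat.div_eq_of_eq_mul_left two_pos hHcard2.symm).symm
    refine ⟨fun c => by rw [horbit c, hHcard], ?_⟩
    apply Nat.eq_of_mul_eq_mul_right hpos
    have : Nat.card (Quot (CmEquiv (m := m) (n := n))) * (Nat.card H * 2)
        = m ^ (n.choose 2) * 2 := by rw [← mul_assoc, hquot]
    rw [hHcard2] at this
    rw [this, hpow]
    ring
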